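/- The function A(r) = r·(1 - P(r))² is continuous on [0,∞) and strictly increasing on (0,∞), satisfies A(0) = 0, and A(r) → 2/π as r → ∞. Consequently A is a bijection from [0,∞) onto [0, 2/π). -/

import Mathlib

open MeasureTheory Real Filter

/-- The standard normal density. -/
noncomputable def gphi (u : ℝ) : ℝ := Real.exp (-u ^ 2 / 2) / Real.sqrt (2 * Real.pi)

/-- The standard normal CDF. -/
noncomputable def gPhi (u : ℝ) : ℝ := ∫ s in Set.Iic u, gphi s

/-- The standard normal tail. -/
noncomputable def gPhiBar (u : ℝ) : ℝ := 1 - gPhi u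

/-- The inverse Mills ratio. -/
noncomputable def mills (u : ℝ) : ℝ := gphi u / gPhiBar u

/-- P(r) = E[tanh²(√r Z)]. -/
noncomputable def Pfun (r : ℝ) : ℝ := ∫ z : ℝ, Real.tanh (Real.sqrt r * z) ^ 2 * gphi z

/-- B(q). -/
noncomputable def Bfun (κ q : ℝ) : ℝ :=
  (1 - q) * ∫ z : ℝ, mills ((κ - Real.sqrt q * z) / Real.sqrt (1 - q)) ^ 2 * gphi z

/-- C_κ. -/
noncomputable def Ckappa (κ : ℝ) : ℝ := ∫ z : ℝ, max (κ - z) 0 ^ 2 * gphi z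

/-- The critical capacity. -/
noncomputable def alphac (κ : ℝ) : ℝ := 2 / (Real.pi * Ckappa κ)

/-- A(r) = r (1 - P(r))². -/
noncomputable def Afun (r : ℝ) : ℝ := r * (1 - Pfun r) ^ 2


lemma tanh_sq_lt_one (x : ℝ) : Real.tanh x ^ 2 < 1 := by
  rw [Real.tanh_eq_sinh_div_cosh, div_pow, div_lt_one (by positivity)]
  nlinarith [Real.cosh_sq_sub_sinh_sq x]

lemma abs_tanh_lt_one (x : ℝ) : |Real.tanh x| < 1 := by
  have := _root_.tanh_sq_lt_one x
  nlinarith [abs_nonneg (Real.tanh x), sq_abs (Real.tanh x)]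

lemma tanh_lt_one (x : ℝ) : Real.tanh x < 1 := (abs_lt.1 (_root_.abs_tanh_lt_one x)).2

lemma hasDerivAt_tanh (x : ℝ) : HasDerivAt Real.tanh (1 - Real.tanh x ^ 2) x := by
  have hc : Real.cosh x ≠ 0 := (Real.cosh_pos x).ne'
  have h := (Real.hasDerivAt_sinh x).div (Real.hasDerivAt_cosh x) hc
  rw [show (Real.sinh / Real.cosh) = Real.tanh from
    (funext fun y => (Real.tanh_eq_sinh_div_cosh y).symm)] at h
  refine h.congr_deriv ?_
  rw [Real.tanh_eq_sinh_div_cosh, div_pow]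
  field_simp

lemma tanh_strictMono : StrictMono Real.tanh :=
  strictMono_of_hasDerivAt_pos (fun x => hasDerivAt_tanh x)
    (fun x => by nlinarith [_root_.tanh_sq_lt_one x])

lemma tanh_nonneg {x : ℝ} (hx : 0 ≤ x) : 0 ≤ Real.tanh x := by
  simpa [Real.tanh_zero] using tanh_strictMono.monotone hx

lemma tendsto_tanh_atTop : Tendsto Real.tanh atTop (nhds 1) := by
  have h : ∀ x : ℝ, Real.tanh x = (1 - Real.exp (-(2 * x))) / (1 + Real.exp (-(2 * x))) := by
    intro x
    have hst : Real.exp x * Real.exp (-x) = 1 := by rw [← Real.exp_add]; simp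
    have ht2 : Real.exp (-(2 * x)) = Real.exp (-x) * Real.exp (-x) := by
      rw [← Real.exp_add]; ring_nf
    have h1 : (0:ℝ) < Real.exp x := Real.exp_pos x
    have h2 : (0:ℝ) < Real.exp (-x) := Real.exp_pos _
    rw [Real.tanh_eq_sinh_div_cosh, Real.sinh_eq, Real.cosh_eq, ht2]
    rw [div_div_div_cancel_right₀, div_eq_div_iff (by positivity) (by positivity)]
    · nlinarith [hst]
    · norm_num
  have he : Tendsto (fun x : ℝ => Real.exp (-(2 * x))) atTop (nhds 0) := by
    have : Tendsto (fun x : ℝ => 2 * x) atTop atTop := tendsto_id.const_mul_atTop two_pos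
    exact Real.tendsto_exp_neg_atTop_nhds_zero.comp this
  have : Tendsto (fun x : ℝ => (1 - Real.exp (-(2 * x))) / (1 + Real.exp (-(2 * x)))) atTop
      (nhds ((1 - 0) / (1 + 0))) :=
    Tendsto.div (tendsto_const_nhds.sub he) (tendsto_const_nhds.add he) (by norm_num)
  norm_num at this
  exact Tendsto.congr (fun x => (h x).symm) this


lemma sqrt_two_pi_pos : 0 < Real.sqrt (2 * Real.pi) :=
  Real.sqrt_pos.2 (by positivity)

lemma gphi_eq : gphi = fun z => Real.exp (-(1/2) * z ^ 2) / Real.sqrt (2 * Real.pi) := by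
  funext z; unfold gphi; ring_nf

@[fun_prop]
lemma continuous_gphi : Continuous gphi := by
  unfold gphi; fun_prop

lemma gphi_pos (z : ℝ) : 0 < gphi z := by
  unfold gphi; positivity

lemma integrable_gphi : Integrable gphi := by
  rw [gphi_eq]
  exact (integrable_exp_neg_mul_sq (by norm_num : (0:ℝ) < 1/2)).div_const _

lemma integral_gphi : ∫ z : ℝ, gphi z = 1 := by
  rw [gphi_eq]
  rw [MeasureTheory.integral_div, integral_gaussian]
  rw [show Real.pi / (1/2) = 2 * Real.pi by ring]
  exact div_self sqrt_two_pi_pos.ne'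

lemma integrable_abs_mul_gphi : Integrable (fun z : ℝ => |z| * gphi z) := by
  have h := ((integrable_mul_exp_neg_mul_sq (by norm_num : (0:ℝ) < 1/2)).div_const
    (Real.sqrt (2 * Real.pi))).abs
  refine h.congr (Filter.Eventually.of_forall fun z => ?_)
  simp only
  rw [abs_div, abs_of_nonneg sqrt_two_pi_pos.le, abs_mul,
    abs_of_nonneg (Real.exp_pos _).le, gphi_eq]
  simp only
  ring

lemma hasDerivAt_gphi (z : ℝ) : HasDerivAt gphi (-z * gphi z) z := by
  have h1 : HasDerivAt (fun x : ℝ => -x ^ 2 / 2) (-z) z := by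
    have := (hasDerivAt_pow 2 z).neg.div_const 2
    refine this.congr_deriv ?_
    simp; ring
  have h2 := (h1.exp).div_const (Real.sqrt (2 * Real.pi))
  refine h2.congr_deriv ?_
  unfold gphi; ring

lemma integral_abs_mul_gphi : ∫ z : ℝ, |z| * gphi z = 2 / Real.sqrt (2 * Real.pi) := by
  have heven : (fun z : ℝ => |z| * gphi z) = fun z => |z| * gphi |z| := by
    funext z
    have : gphi |z| = gphi z := by unfold gphi; rw [sq_abs]
    rw [this]
  rw [heven]
  rw [integral_comp_abs (f := fun x => x * gphi x)]
  have hF : ∀ x ∈ Set.Ici (0:ℝ), HasDerivAt (fun x : ℝ => -gphi x) (x * gphi x) x := by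
    intro x _
    refine (hasDerivAt_gphi x).neg.congr_deriv ?_
    ring
  have hInt : IntegrableOn (fun x : ℝ => x * gphi x) (Set.Ioi 0) := by
    have : Integrable (fun x : ℝ => x * gphi x) := by
      rw [gphi_eq]
      simpa [div_eq_mul_inv, mul_assoc] using
        (integrable_mul_exp_neg_mul_sq (by norm_num : (0:ℝ) < 1/2)).div_const
          (Real.sqrt (2 * Real.pi))
    exact this.integrableOn
  have hT : Tendsto (fun x : ℝ => -gphi x) atTop (nhds 0) := by
    rw [show (0:ℝ) = -(0 / Real.sqrt (2 * Real.pi)) by simp]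
    apply Tendsto.neg
    apply Tendsto.div_const
    apply Real.tendsto_exp_atBot.comp
    have : Tendsto (fun x : ℝ => x ^ 2 / 2) atTop atTop :=
      (tendsto_pow_atTop (by norm_num)).atTop_div_const (by norm_num)
    rw [show (fun x : ℝ => -x ^ 2 / 2) = (fun x : ℝ => -(x ^ 2 / 2)) by
      funext x; ring]
    exact tendsto_neg_atBot_iff.mpr this
  have := integral_Ioi_of_hasDerivAt_of_tendsto' (f := fun x : ℝ => -gphi x)
    (f' := fun x : ℝ => x * gphi x) (a := 0) hF hInt hT
  rw [this]
  unfold gphi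
  norm_num
  rw [mul_comm]
  rw [eq_div_iff (by positivity)]
  field_simp

@[fun_prop]
lemma continuous_tanh : Continuous Real.tanh := by
  rw [show Real.tanh = fun x => Real.sinh x / Real.cosh x from
    funext fun x => Real.tanh_eq_sinh_div_cosh x]
  exact Real.continuous_sinh.div Real.continuous_cosh fun x => (Real.cosh_pos x).ne'

noncomputable def hfun (u : ℝ) : ℝ := ∫ z : ℝ, z * Real.tanh (u * z) * gphi z

lemma integrable_F (u : ℝ) : Integrable (fun z : ℝ => z * Real.tanh (u * z) * gphi z) := by
  apply integrable_abs_mul_gphi.mono'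
  · exact (Continuous.aestronglyMeasurable (by fun_prop))
  · refine Filter.Eventually.of_forall fun z => ?_
    rw [Real.norm_eq_abs, abs_mul, abs_mul, abs_of_nonneg (gphi_pos z).le]
    have h1 : |Real.tanh (u * z)| ≤ 1 := (_root_.abs_tanh_lt_one _).le
    nlinarith [mul_le_mul_of_nonneg_right (mul_le_mul_of_nonneg_left h1 (abs_nonneg z))
      (gphi_pos z).le]

lemma integrable_tanh_sq (u : ℝ) : Integrable (fun z : ℝ => Real.tanh (u * z) ^ 2 * gphi z) := by
  apply integrable_gphi.mono'
  · exact (Continuous.aestronglyMeasurable (by fun_prop))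
  · refine Filter.Eventually.of_forall fun z => ?_
    rw [Real.norm_eq_abs, abs_mul, abs_of_nonneg (gphi_pos z).le,
      abs_of_nonneg (sq_nonneg _)]
    nlinarith [_root_.tanh_sq_lt_one (u * z), gphi_pos z]

lemma ibp (c : ℝ) : ∫ z : ℝ, (c * (1 - Real.tanh (c * z) ^ 2)) * gphi z = hfun c := by
  have hu : ∀ z : ℝ, HasDerivAt (fun z : ℝ => Real.tanh (c * z))
      (c * (1 - Real.tanh (c * z) ^ 2)) z := by
    intro z
    have h1 : HasDerivAt (fun z : ℝ => c * z) c z := by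
      simpa using (hasDerivAt_id z).const_mul c
    have := (hasDerivAt_tanh (c * z)).comp z h1
    refine this.congr_deriv ?_
    ring
  have huv' : Integrable ((fun z : ℝ => Real.tanh (c * z)) * (fun z : ℝ => -z * gphi z)) := by
    apply integrable_abs_mul_gphi.mono'
    · exact (Continuous.aestronglyMeasurable (Continuous.mul (by fun_prop) (by fun_prop)))
    · refine Filter.Eventually.of_forall fun z => ?_
      simp only [Pi.mul_apply]
      rw [Real.norm_eq_abs, abs_mul, abs_mul, abs_neg, abs_of_nonneg (gphi_pos z).le]
      have h1 : |Real.tanh (c * z)| ≤ 1 := (_root_.abs_tanh_lt_one _).le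
      nlinarith [mul_le_mul_of_nonneg_right (mul_le_mul_of_nonneg_left h1 (abs_nonneg z))
        (gphi_pos z).le]
  have hu'v : Integrable ((fun z : ℝ => c * (1 - Real.tanh (c * z) ^ 2)) * gphi) := by
    apply (integrable_gphi.const_mul |c|).mono'
    · exact (Continuous.aestronglyMeasurable (Continuous.mul (by fun_prop) continuous_gphi))
    · refine Filter.Eventually.of_forall fun z => ?_
      simp only [Pi.mul_apply]
      rw [Real.norm_eq_abs, abs_mul, abs_mul, abs_of_nonneg (gphi_pos z).le]
      have h2 : |1 - Real.tanh (c * z) ^ 2| ≤ 1 := by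
        rw [abs_of_nonneg (by nlinarith [_root_.tanh_sq_lt_one (c * z)])]
        nlinarith [sq_nonneg (Real.tanh (c * z))]
      nlinarith [mul_le_mul_of_nonneg_right (mul_le_mul_of_nonneg_left h2 (abs_nonneg c))
        (gphi_pos z).le]
  have huv : Integrable ((fun z : ℝ => Real.tanh (c * z)) * gphi) := by
    apply integrable_gphi.mono'
    · exact (Continuous.aestronglyMeasurable (Continuous.mul (by fun_prop) continuous_gphi))
    · refine Filter.Eventually.of_forall fun z => ?_
      simp only [Pi.mul_apply]
      rw [Real.norm_eq_abs, abs_mul, abs_of_nonneg (gphi_pos z).le]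
      have h1 : |Real.tanh (c * z)| ≤ 1 := (_root_.abs_tanh_lt_one _).le
      nlinarith [gphi_pos z]
  have key := integral_mul_deriv_eq_deriv_mul_of_integrable (fun z _ => hu z) (fun z _ => hasDerivAt_gphi z)
    huv' hu'v huv
  have h1 : ∫ z : ℝ, Real.tanh (c * z) * (-z * gphi z) = - hfun c := by
    rw [hfun, ← MeasureTheory.integral_neg]
    congr 1; funext z; ring
  rw [h1] at key
  have := neg_injective key
  rw [this]

lemma mul_tanh_le {a b z : ℝ} (hab : a ≤ b) : z * Real.tanh (a * z) ≤ z * Real.tanh (b * z) := by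
  rcases le_total 0 z with hz | hz
  · exact mul_le_mul_of_nonneg_left
      (tanh_strictMono.monotone (mul_le_mul_of_nonneg_right hab hz)) hz
  · have : Real.tanh (b * z) ≤ Real.tanh (a * z) :=
      tanh_strictMono.monotone (mul_le_mul_of_nonpos_right hab hz)
    exact mul_le_mul_of_nonpos_left this hz

lemma mul_tanh_nonneg {u z : ℝ} (hu : 0 ≤ u) : 0 ≤ z * Real.tanh (u * z) := by
  simpa using mul_tanh_le (z := z) hu

lemma Lval : (∫ z : ℝ, |z| * gphi z) = 2 / Real.sqrt (2 * Real.pi) := integral_abs_mul_gphi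

lemma hfun_nonneg {u : ℝ} (hu : 0 ≤ u) : 0 ≤ hfun u := by
  apply MeasureTheory.integral_nonneg
  intro z
  exact mul_nonneg (mul_tanh_nonneg hu) (gphi_pos z).le

lemma support_pos_aux {f : ℝ → ℝ} (hf : ∀ z ∈ Set.Ioi (0:ℝ), f z ≠ 0) :
    0 < (volume : Measure ℝ) (Function.support f) := by
  have h1 : Set.Ioi (0:ℝ) ⊆ Function.support f := fun z hz => hf z hz
  have h2 := measure_mono (μ := (volume : Measure ℝ)) h1
  rw [Real.volume_Ioi] at h2
  exact lt_of_lt_of_le (by norm_num) h2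

lemma hfun_pos {u : ℝ} (hu : 0 < u) : 0 < hfun u := by
  rw [hfun]
  rw [MeasureTheory.integral_pos_iff_support_of_nonneg
    (fun z => mul_nonneg (mul_tanh_nonneg hu.le) (gphi_pos z).le) (integrable_F u)]
  apply support_pos_aux
  intro z hz
  have hz' : (0:ℝ) < z := hz
  have ht : 0 < Real.tanh (u * z) := by
    have := tanh_strictMono (show (0:ℝ) < u * z by positivity)
    simpa using this
  exact ne_of_gt (mul_pos (mul_pos hz' ht) (gphi_pos z))

lemma hfun_strictMonoOn : StrictMonoOn hfun (Set.Ici (0:ℝ)) := by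
  intro a ha b hb hab
  have key : 0 < ∫ z : ℝ, (z * Real.tanh (b * z) * gphi z - z * Real.tanh (a * z) * gphi z) := by
    rw [MeasureTheory.integral_pos_iff_support_of_nonneg]
    · apply support_pos_aux
      intro z hz
      have hz' : (0:ℝ) < z := hz
      have ht : Real.tanh (a * z) < Real.tanh (b * z) := tanh_strictMono (by nlinarith)
      have : z * Real.tanh (a * z) * gphi z < z * Real.tanh (b * z) * gphi z :=
        mul_lt_mul_of_pos_right (mul_lt_mul_of_pos_left ht hz') (gphi_pos z)
      exact sub_ne_zero_of_ne (ne_of_gt this)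
    · intro z
      simp only [Pi.zero_apply, sub_nonneg]
      exact mul_le_mul_of_nonneg_right (mul_tanh_le hab.le) (gphi_pos z).le
    · exact (integrable_F b).sub (integrable_F a)
  rw [MeasureTheory.integral_sub (integrable_F b) (integrable_F a)] at key
  have : hfun b - hfun a > 0 := key
  unfold hfun
  linarith [this]

lemma hfun_lt (u : ℝ) : hfun u < 2 / Real.sqrt (2 * Real.pi) := by
  rw [← Lval]
  have key : 0 < ∫ z : ℝ, (|z| * gphi z - z * Real.tanh (u * z) * gphi z) := by
    rw [MeasureTheory.integral_pos_iff_support_of_nonneg]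
    · apply support_pos_aux
      intro z hz
      have hz' : (0:ℝ) < z := hz
      have ht : Real.tanh (u * z) < 1 := _root_.tanh_lt_one _
      have habs : |z| = z := abs_of_pos hz'
      have : z * Real.tanh (u * z) * gphi z < |z| * gphi z := by
        rw [habs]
        have h4 : z * Real.tanh (u * z) < z := by
          have := mul_lt_mul_of_pos_left ht hz'
          simpa using this
        exact mul_lt_mul_of_pos_right h4 (gphi_pos z)
      exact sub_ne_zero_of_ne (ne_of_gt this)
    · intro z
      simp only [Pi.zero_apply, sub_nonneg]
      have h1 : z * Real.tanh (u * z) ≤ |z| := by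
        calc z * Real.tanh (u * z) ≤ |z * Real.tanh (u * z)| := le_abs_self _
        _ = |z| * |Real.tanh (u * z)| := abs_mul _ _
        _ ≤ |z| * 1 := mul_le_mul_of_nonneg_left (_root_.abs_tanh_lt_one _).le (abs_nonneg z)
        _ = |z| := mul_one _
      exact mul_le_mul_of_nonneg_right h1 (gphi_pos z).le
    · exact integrable_abs_mul_gphi.sub (integrable_F u)
  rw [MeasureTheory.integral_sub integrable_abs_mul_gphi (integrable_F u)] at key
  unfold hfun
  linarith [key]

lemma hfun_continuous : Continuous hfun := by
  apply MeasureTheory.continuous_of_dominated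
    (bound := fun z : ℝ => |z| * gphi z)
  · intro u
    exact (Continuous.aestronglyMeasurable (by fun_prop))
  · intro u
    refine Filter.Eventually.of_forall fun z => ?_
    rw [Real.norm_eq_abs, abs_mul, abs_mul, abs_of_nonneg (gphi_pos z).le]
    nlinarith [mul_le_mul_of_nonneg_right (mul_le_mul_of_nonneg_left
      (_root_.abs_tanh_lt_one (u * z)).le (abs_nonneg z)) (gphi_pos z).le]
  · exact integrable_abs_mul_gphi
  · refine Filter.Eventually.of_forall fun z => ?_
    fun_prop

lemma tendsto_tanh_atBot : Tendsto Real.tanh atBot (nhds (-1)) := by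
  have h := (tendsto_tanh_atTop.comp tendsto_neg_atBot_atTop).neg
  simp only [Function.comp_def, Real.tanh_neg, neg_neg] at h
  exact h

lemma hfun_tendsto : Tendsto hfun atTop (nhds (2 / Real.sqrt (2 * Real.pi))) := by
  rw [← Lval]
  apply MeasureTheory.tendsto_integral_filter_of_dominated_convergence
    (bound := fun z : ℝ => |z| * gphi z)
  · refine Filter.Eventually.of_forall fun u => ?_
    exact (Continuous.aestronglyMeasurable (by fun_prop))
  · refine Filter.Eventually.of_forall fun u => ?_
    refine Filter.Eventually.of_forall fun z => ?_
    rw [Real.norm_eq_abs, abs_mul, abs_mul, abs_of_nonneg (gphi_pos z).le]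
    nlinarith [mul_le_mul_of_nonneg_right (mul_le_mul_of_nonneg_left
      (_root_.abs_tanh_lt_one (u * z)).le (abs_nonneg z)) (gphi_pos z).le]
  · exact integrable_abs_mul_gphi
  · refine Filter.Eventually.of_forall fun z => ?_
    rcases lt_trichotomy z 0 with hz | hz | hz
    · have h1 : Tendsto (fun u : ℝ => u * z) atTop atBot := tendsto_id.atTop_mul_const_of_neg hz
      have h2 : Tendsto (fun u : ℝ => Real.tanh (u * z)) atTop (nhds (-1)) :=
        tendsto_tanh_atBot.comp h1
      have h3 := ((tendsto_const_nhds (x := z)).mul h2).mul (tendsto_const_nhds (x := gphi z))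
      convert h3 using 2
      rw [abs_of_neg hz]; ring
    · subst hz
      simp only [mul_zero, zero_mul, Real.tanh_zero, abs_zero]
      exact tendsto_const_nhds
    · have h1 : Tendsto (fun u : ℝ => u * z) atTop atTop := tendsto_id.atTop_mul_const hz
      have h2 : Tendsto (fun u : ℝ => Real.tanh (u * z)) atTop (nhds 1) :=
        tendsto_tanh_atTop.comp h1
      have h3 := ((tendsto_const_nhds (x := z)).mul h2).mul (tendsto_const_nhds (x := gphi z))
      convert h3 using 2
      rw [abs_of_pos hz]; ring

lemma one_sub_Pfun (r : ℝ) :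
    1 - Pfun r = ∫ z : ℝ, (1 - Real.tanh (Real.sqrt r * z) ^ 2) * gphi z := by
  have h := MeasureTheory.integral_sub integrable_gphi (integrable_tanh_sq (Real.sqrt r))
  have h2 : ∫ z : ℝ, (1 - Real.tanh (Real.sqrt r * z) ^ 2) * gphi z
      = ∫ z : ℝ, (gphi z - Real.tanh (Real.sqrt r * z) ^ 2 * gphi z) := by
    congr 1; funext z; ring
  rw [h2, h, integral_gphi, Pfun]

lemma Afun_eq {r : ℝ} (hr : 0 ≤ r) : Afun r = hfun (Real.sqrt r) ^ 2 := by
  have h1 : Real.sqrt r * (1 - Pfun r) = hfun (Real.sqrt r) := by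
    rw [one_sub_Pfun, ← MeasureTheory.integral_const_mul, ← ibp (Real.sqrt r)]
    congr 1; funext z; ring
  rw [Afun, ← h1, mul_pow, Real.sq_sqrt hr]

lemma Afun_strictMonoOn_Ici : StrictMonoOn Afun (Set.Ici (0:ℝ)) := by
  intro a ha b hb hab
  rw [Afun_eq ha, Afun_eq (le_trans ha hab.le)]
  have h1 : hfun (Real.sqrt a) < hfun (Real.sqrt b) :=
    hfun_strictMonoOn (Real.sqrt_nonneg a) (Real.sqrt_nonneg b) (Real.sqrt_lt_sqrt ha hab)
  exact pow_lt_pow_left₀ h1 (hfun_nonneg (Real.sqrt_nonneg a)) two_ne_zero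

lemma Lsq : (2 / Real.sqrt (2 * Real.pi)) ^ 2 = 2 / Real.pi := by
  rw [div_pow, Real.sq_sqrt (by positivity : (0:ℝ) ≤ 2 * Real.pi),
    show (2:ℝ) ^ 2 = 4 by norm_num, div_eq_div_iff (by positivity) (by positivity)]
  ring

lemma sqrt_tendsto_atTop : Tendsto Real.sqrt atTop atTop := by
  apply tendsto_atTop_atTop.mpr
  intro b
  refine ⟨b ^ 2, fun a ha => ?_⟩
  have h : |b| ≤ Real.sqrt a := by
    rw [← Real.sqrt_sq_eq_abs]; exact Real.sqrt_le_sqrt ha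
  exact le_trans (le_abs_self b) h

lemma Afun_tendsto : Filter.Tendsto Afun Filter.atTop (nhds (2 / Real.pi)) := by
  have h1 : Tendsto (fun r : ℝ => hfun (Real.sqrt r) ^ 2) atTop
      (nhds ((2 / Real.sqrt (2 * Real.pi)) ^ 2)) :=
    (hfun_tendsto.comp sqrt_tendsto_atTop).pow 2
  rw [← Lsq]
  apply Tendsto.congr' _ h1
  filter_upwards [Filter.eventually_ge_atTop (0:ℝ)] with r hr
  exact (Afun_eq hr).symm

theorem stmt_5 :
    ContinuousOn Afun (Set.Ici (0 : ℝ)) ∧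
    StrictMonoOn Afun (Set.Ioi (0 : ℝ)) ∧
    Afun 0 = 0 ∧
    Filter.Tendsto Afun Filter.atTop (nhds (2 / Real.pi)) ∧
    Set.BijOn Afun (Set.Ici (0 : ℝ)) (Set.Ico (0 : ℝ) (2 / Real.pi)) := by
  have hcont : ContinuousOn Afun (Set.Ici (0:ℝ)) :=
    (((hfun_continuous.comp Real.continuous_sqrt).pow 2).continuousOn).congr
      (fun r hr => Afun_eq hr)
  have hA0 : Afun 0 = 0 := by simp [Afun]
  refine ⟨hcont, Afun_strictMonoOn_Ici.mono (Set.Ioi_subset_Ici le_rfl), hA0, Afun_tendsto, ?_⟩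
  refine ⟨?_, Afun_strictMonoOn_Ici.injOn, ?_⟩
  · intro r hr
    constructor
    · rw [Afun_eq hr]; positivity
    · rw [Afun_eq hr, ← Lsq]
      exact pow_lt_pow_left₀ (hfun_lt _) (hfun_nonneg (Real.sqrt_nonneg r)) two_ne_zero
  · have := (isPreconnected_Ici (a := (0:ℝ))).intermediate_value_Ico
      (a := (0:ℝ)) (l := Filter.atTop) Set.self_mem_Ici
      (le_principal_iff.2 (Ici_mem_atTop 0)) hcont Afun_tendsto
    rw [hA0] at this
    exact fun y hy => this hy
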